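/- Let T ∈ M_p(ℤ) (in r×r blocks, p = p'r) be upper block-triangular with identity blocks on the diagonal and −E_r in all blocks of the first block-row beyond the first, and let T' be the same with +E_r. Then both T and T' are invertible over ℤ, and T'·G'₄·T, where G'₄ = (block form of) E_p − W_p^{−α}, has its entire first block-row equal to zero. -/

import Mathlib

lemma det_aux (p r : ℕ) (hr : 0 < r) (c : ℤ) :
    IsUnit (Matrix.det (Matrix.of fun (i j : Fin p) =>
      if i = j then (1 : ℤ)
      else if (i : ℕ) / r = 0 ∧ (i : ℕ) % r = (j : ℕ) % r then c else 0)) := by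
  rw [Matrix.det_of_upperTriangular]
  · simp
  · intro i j hij
    simp only [Matrix.of_apply]
    have hne : i ≠ j := fun h => by subst h; exact lt_irrefl _ hij
    rw [if_neg hne, if_neg]
    rintro ⟨h1, h2⟩
    have hi : (i : ℕ) < r := (Nat.div_eq_zero_iff.mp h1).resolve_left (by omega)
    have hj : (j : ℕ) < i := hij
    rw [Nat.mod_eq_of_lt hi, Nat.mod_eq_of_lt (lt_trans hj hi)] at h2
    omega

theorem first_block_row_vanishes
    (p r p' α α' : ℕ) (hr : 0 < r) (hp' : p = p' * r) (hα' : α = α' * r)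
    (hα0 : 0 < α) (hαp : α < p)
    (T T' G'₄ : Matrix (Fin p) (Fin p) ℤ)
    (hT : T = Matrix.of fun (i j : Fin p) =>
      if i = j then (1 : ℤ)
      else if (i : ℕ) / r = 0 ∧ (i : ℕ) % r = (j : ℕ) % r then -1 else 0)
    (hT' : T' = Matrix.of fun (i j : Fin p) =>
      if i = j then (1 : ℤ)
      else if (i : ℕ) / r = 0 ∧ (i : ℕ) % r = (j : ℕ) % r then 1 else 0)
    (hG : G'₄ = Matrix.of fun (i j : Fin p) =>
      (if i = j then (1 : ℤ) else 0) -
        (if (i : ℕ) = ((j : ℕ) + α) % p then 1 else 0)) :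
    IsUnit T.det ∧ IsUnit T'.det ∧
    ∀ (i j : Fin p), (i : ℕ) < r → (T' * G'₄ * T) i j = 0 := by
  have hrp : r ∣ p := ⟨p', by rw [hp', Nat.mul_comm]⟩
  have hp0 : 0 < p := by omega
  have hT'simp : ∀ i k : Fin p, (i : ℕ) < r →
      T' i k = if (k : ℕ) % r = (i : ℕ) then 1 else 0 := by
    intro i k hi
    subst hT'
    simp only [Matrix.of_apply]
    have hdiv : (i : ℕ) / r = 0 := Nat.div_eq_of_lt hi
    have hmod : (i : ℕ) % r = i := Nat.mod_eq_of_lt hi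
    by_cases h : i = k
    · subst h; simp [hmod]
    · rw [if_neg h]
      by_cases h2 : (k : ℕ) % r = (i : ℕ)
      · rw [if_pos h2, if_pos ⟨hdiv, by omega⟩]
      · rw [if_neg h2, if_neg (by rintro ⟨_, h'⟩; omega)]
  have hzero : ∀ i l : Fin p, (i : ℕ) < r → (T' * G'₄) i l = 0 := by
    intro i l hi
    rw [Matrix.mul_apply]
    set m : Fin p := ⟨((l : ℕ) + α) % p, Nat.mod_lt _ hp0⟩ with hm
    have key : ∀ k : Fin p, T' i k * G'₄ k l =
        (if k = l then (if (k : ℕ) % r = (i : ℕ) then (1 : ℤ) else 0) else 0)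
        - (if k = m then (if (k : ℕ) % r = (i : ℕ) then (1 : ℤ) else 0) else 0) := by
      intro k
      rw [hT'simp i k hi, hG]
      simp only [Matrix.of_apply]
      have hkm : ((k : ℕ) = ((l : ℕ) + α) % p) ↔ k = m := by
        rw [Fin.ext_iff]
      simp only [Matrix.of_apply, hkm]
      split_ifs <;> ring
    rw [Finset.sum_congr rfl (fun k _ => key k), Finset.sum_sub_distrib,
      Finset.sum_ite_eq' Finset.univ l, Finset.sum_ite_eq' Finset.univ m]
    simp only [Finset.mem_univ, if_true]
    have hmr : (m : ℕ) % r = (l : ℕ) % r := by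
      show ((l : ℕ) + α) % p % r = (l : ℕ) % r
      rw [Nat.mod_mod_of_dvd _ hrp, hα', Nat.add_mul_mod_self_right]
    rw [hmr]
    ring
  refine ⟨hT ▸ det_aux p r hr (-1), hT' ▸ det_aux p r hr 1, ?_⟩
  intro i j hi
  rw [Matrix.mul_apply]
  apply Finset.sum_eq_zero
  intro l _
  rw [hzero i l hi, zero_mul]
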